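/- For every pair of finite numbers β1, β2 > 0, there exist Borel probability measures p and q on ℝ (which can be taken supported on two points) such that D_W^{β1,β2}(p, q) = 0 but p ≠ q, and hence the Wasserstein-1 distance D_W(p, q) is strictly positive. -/

import Mathlib

open MeasureTheory Metric Set
open scoped ENNReal

noncomputable section

/-- The topological support of a Borel measure: the smallest closed set of full measure,
realized as the intersection of all closed sets whose complement is null. -/
def msupport {X : Type*} [TopologicalSpace X] [MeasurableSpace X] (μ : Measure X) : Set X :=
  ⋂₀ {S : Set X | IsClosed S ∧ μ Sᶜ = 0}

/-- The symmetric support difference (SSD) divergence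
`D_△(p, q) = ∫ d(x, supp q) dp + ∫ d(x, supp p) dq` (valued in `ℝ≥0∞`). -/
def Dtri {X : Type*} [MeasurableSpace X] [PseudoMetricSpace X] (p q : Measure X) : ℝ≥0∞ :=
  (∫⁻ x, ENNReal.ofReal (infDist x (msupport q)) ∂p) +
  (∫⁻ x, ENNReal.ofReal (infDist x (msupport p)) ∂q)

/-- The Wasserstein-1 distance: infimum of `∫ d(x, y) dγ` over couplings of `p` and `q`. -/
def DW {X : Type*} [MeasurableSpace X] [PseudoMetricSpace X] (p q : Measure X) : ℝ≥0∞ :=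
  ⨅ γ ∈ {γ : Measure (X × X) | γ.map Prod.fst = p ∧ γ.map Prod.snd = q},
    ∫⁻ z, ENNReal.ofReal (dist z.1 z.2) ∂γ

/-- The β-admissible Wasserstein distance: infimum of `∫ d(x, y) dγ` over measures `γ`
whose first marginal is `p` and whose second marginal is `≤ (1 + β) • q`. -/
def DWbeta {X : Type*} [MeasurableSpace X] [PseudoMetricSpace X]
    (β : ℝ) (p q : Measure X) : ℝ≥0∞ :=
  ⨅ γ ∈ {γ : Measure (X × X) |
      γ.map Prod.fst = p ∧ γ.map Prod.snd ≤ (ENNReal.ofReal (1 + β)) • q},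
    ∫⁻ z, ENNReal.ofReal (dist z.1 z.2) ∂γ

/-- The symmetrized (β₁, β₂)-admissible Wasserstein distance. -/
def DWsym {X : Type*} [MeasurableSpace X] [PseudoMetricSpace X]
    (β₁ β₂ : ℝ) (p q : Measure X) : ℝ≥0∞ :=
  DWbeta β₁ p q + DWbeta β₂ q p

/-- If `p ≤ (1+β) • q`, the diagonal coupling shows `DWbeta β p q = 0`. -/
lemma DWbeta_eq_zero_of_le {p q : Measure ℝ} (β : ℝ)
    (hpq : p ≤ (ENNReal.ofReal (1 + β)) • q) : DWbeta β p q = 0 := by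
  refine le_antisymm ?_ (zero_le)
  have hdiag : Measurable (fun x : ℝ => (x, x)) := measurable_id.prodMk measurable_id
  have hfst : (p.map (fun x : ℝ => (x, x))).map Prod.fst = p := by
    rw [Measure.map_map measurable_fst hdiag]
    exact Measure.map_id
  have hsnd : (p.map (fun x : ℝ => (x, x))).map Prod.snd = p := by
    rw [Measure.map_map measurable_snd hdiag]
    exact Measure.map_id
  have hmem : p.map (fun x : ℝ => (x, x)) ∈ {γ : Measure (ℝ × ℝ) |
      γ.map Prod.fst = p ∧ γ.map Prod.snd ≤ (ENNReal.ofReal (1 + β)) • q} :=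
    ⟨hfst, hsnd.trans_le hpq⟩
  refine le_trans (iInf₂_le _ hmem) ?_
  rw [lintegral_map ((measurable_fst.dist measurable_snd).ennreal_ofReal) hdiag]
  simp

/-- **Proposition 4, part 3a.** For any finite β₁, β₂ > 0 there are
probability measures on ℝ with `D_W^{β₁,β₂}(p, q) = 0` but `p ≠ q`, hence `D_W(p, q) > 0`. -/
theorem relaxed_alignment_not_distribution_alignment
    (β₁ β₂ : ℝ) (hβ₁ : 0 < β₁) (hβ₂ : 0 < β₂) :
    ∃ p q : Measure ℝ, IsProbabilityMeasure p ∧ IsProbabilityMeasure q ∧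
      DWsym β₁ β₂ p q = 0 ∧ p ≠ q ∧ 0 < DW p q := by
  set ε : ℝ := min (β₁ / 2) (β₂ / (2 * (1 + β₂))) with hεdef
  have hε0 : 0 < ε := lt_min (by positivity) (by positivity)
  have hεβ₁ : ε ≤ β₁ / 2 := min_le_left _ _
  have hεβ₂ : (1 + β₂) * ε ≤ β₂ / 2 := by
    have h := min_le_right (β₁ / 2) (β₂ / (2 * (1 + β₂)))
    rw [← hεdef] at h
    have h1 : (0:ℝ) < 1 + β₂ := by linarith
    calc (1 + β₂) * ε ≤ (1 + β₂) * (β₂ / (2 * (1 + β₂))) := by nlinarith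
      _ = β₂ / 2 := by field_simp
  have hεhalf : ε < 1 / 2 := by
    have h1 : (0:ℝ) < 1 + β₂ := by linarith
    nlinarith
  set a : ℝ≥0∞ := ENNReal.ofReal (1 / 2 + ε) with hadef
  set b : ℝ≥0∞ := ENNReal.ofReal (1 / 2 - ε) with hbdef
  set h2 : ℝ≥0∞ := ENNReal.ofReal (1 / 2) with h2def
  set p : Measure ℝ := a • Measure.dirac 0 + b • Measure.dirac 1 with hpdef
  set q : Measure ℝ := h2 • Measure.dirac 0 + h2 • Measure.dirac 1 with hqdef
  have hab : a + b = 1 := by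
    rw [hadef, hbdef, ← ENNReal.ofReal_add (by linarith) (by linarith)]
    norm_num
  have hpuniv : p univ = 1 := by
    simp [hpdef, hab]
  have hquniv : q univ = 1 := by
    rw [hqdef]
    simp only [Measure.add_apply, Measure.smul_apply, smul_eq_mul, measure_univ, mul_one]
    rw [h2def, ← ENNReal.ofReal_add (by norm_num) (by norm_num)]
    norm_num
  have hp : IsProbabilityMeasure p := ⟨hpuniv⟩
  have hq : IsProbabilityMeasure q := ⟨hquniv⟩
  -- pointwise computations
  have hm0 : MeasurableSet ({0} : Set ℝ) := measurableSet_singleton 0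
  have hp0 : p {0} = a := by
    simp [hpdef, Measure.dirac_apply' _ hm0]
  have hq0 : q {0} = h2 := by
    simp [hqdef, Measure.dirac_apply' _ hm0]
  -- comparisons
  have key : ∀ (c x y : ℝ≥0∞), x ≤ c * y → ∀ s : Set ℝ, ∀ z : ℝ,
      x * Measure.dirac z s ≤ c * (y * Measure.dirac z s) := by
    intro c x y hxy s z
    rw [← mul_assoc]
    gcongr
  have hle1 : p ≤ (ENNReal.ofReal (1 + β₁)) • q := by
    rw [Measure.le_iff]
    intro s hs
    rw [hpdef, hqdef]
    simp only [Measure.add_apply, Measure.smul_apply, smul_eq_mul, mul_add]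
    refine add_le_add (key _ _ _ ?_ s 0) (key _ _ _ ?_ s 1)
    · rw [hadef, h2def, ← ENNReal.ofReal_mul (by linarith)]
      exact ENNReal.ofReal_le_ofReal (by nlinarith)
    · rw [hbdef, h2def, ← ENNReal.ofReal_mul (by linarith)]
      exact ENNReal.ofReal_le_ofReal (by nlinarith)
  have hle2 : q ≤ (ENNReal.ofReal (1 + β₂)) • p := by
    rw [Measure.le_iff]
    intro s hs
    rw [hpdef, hqdef]
    simp only [Measure.add_apply, Measure.smul_apply, smul_eq_mul, mul_add]
    refine add_le_add (key _ _ _ ?_ s 0) (key _ _ _ ?_ s 1)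
    · rw [h2def, hadef, ← ENNReal.ofReal_mul (by linarith)]
      exact ENNReal.ofReal_le_ofReal (by nlinarith)
    · rw [h2def, hbdef, ← ENNReal.ofReal_mul (by linarith)]
      exact ENNReal.ofReal_le_ofReal (by nlinarith)
  refine ⟨p, q, hp, hq, ?_, ?_, ?_⟩
  · rw [DWsym, DWbeta_eq_zero_of_le β₁ hle1, DWbeta_eq_zero_of_le β₂ hle2, add_zero]
  · intro h
    have h0 : p {0} = q {0} := by rw [h]
    rw [hp0, hq0, hadef, h2def,
      ENNReal.ofReal_eq_ofReal_iff (by linarith) (by norm_num)] at h0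
    linarith
  · -- DW p q ≥ ofReal ε > 0
    refine lt_of_lt_of_le (ENNReal.ofReal_pos.2 hε0) (le_iInf₂ fun γ hγ => ?_)
    obtain ⟨hγ1, hγ2⟩ := hγ
    set T : Set (ℝ × ℝ) := {((0 : ℝ), (1 : ℝ))} with hTdef
    have hTm : MeasurableSet T := measurableSet_singleton _
    -- γ T ≥ ofReal ε
    have hsub : (Prod.fst ⁻¹' ({0} : Set ℝ)) ⊆ T ∪ (Prod.snd ⁻¹' ({1} : Set ℝ))ᶜ := by
      rintro ⟨x, y⟩ hx
      simp only [mem_preimage, mem_singleton_iff] at hx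
      by_cases hy : y = 1
      · left; simp [hTdef, hx, hy, Prod.ext_iff]
      · right; simp [hy]
    have hfst0 : γ (Prod.fst ⁻¹' ({0} : Set ℝ)) = a := by
      rw [← Measure.map_apply measurable_fst hm0, hγ1, hp0]
    have hsndc : γ ((Prod.snd ⁻¹' ({1} : Set ℝ))ᶜ) = h2 := by
      have heq : ((Prod.snd : ℝ × ℝ → ℝ) ⁻¹' ({1} : Set ℝ))ᶜ =
          (Prod.snd : ℝ × ℝ → ℝ) ⁻¹' (({1} : Set ℝ)ᶜ) := rfl
      rw [heq, ← Measure.map_apply measurable_snd (measurableSet_singleton 1).compl, hγ2]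
      simp [hqdef, Measure.dirac_apply' _ (measurableSet_singleton (1:ℝ)).compl]
    have hγT : ENNReal.ofReal ε ≤ γ T := by
      have hbound : a ≤ γ T + h2 := by
        calc a = γ (Prod.fst ⁻¹' ({0} : Set ℝ)) := hfst0.symm
          _ ≤ γ (T ∪ (Prod.snd ⁻¹' ({1} : Set ℝ))ᶜ) := measure_mono hsub
          _ ≤ γ T + γ ((Prod.snd ⁻¹' ({1} : Set ℝ))ᶜ) := measure_union_le _ _
          _ = γ T + h2 := by rw [hsndc]
      have hsuble : a - h2 ≤ γ T := tsub_le_iff_right.mpr hbound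
      rwa [hadef, h2def, ← ENNReal.ofReal_sub _ (by norm_num), add_sub_cancel_left] at hsuble
    calc ENNReal.ofReal ε ≤ γ T := hγT
      _ = ∫⁻ z in T, ENNReal.ofReal (dist z.1 z.2) ∂γ := by
          rw [setLIntegral_congr_fun hTm (fun z hz => ?_), setLIntegral_one]
          simp only [hTdef, mem_singleton_iff] at hz
          subst hz
          norm_num
      _ ≤ ∫⁻ z, ENNReal.ofReal (dist z.1 z.2) ∂γ := setLIntegral_le_lintegral _ _
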